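/- Let α > 1 and let (λ_j)_{j≥1} be positive real numbers with c·j^{−α} ≤ λ_j ≤ C·j^{−α} for all j ≥ 1 and some constants 0 < c ≤ C. Then there exists a constant K > 0 such that for every ε ∈ (0, 1], Σ_{j=1}^{∞} λ_j (λ_j + ε)^{−2} ≤ K · ε^{−(α+1)/α}. -/

import Mathlib

lemma auxA (α : ℝ) (hα : 1 ≤ α) (x : ℝ) (hx : 0 < x) :
    x ^ (α - 1) * (x + α) ≤ (x + 1) ^ α := by
  have hs : (-1 : ℝ) ≤ 1 / x := by
    have h0 : (0:ℝ) ≤ 1 / x := by positivity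
    linarith
  have hB := one_add_mul_self_le_rpow_one_add hs hα
  have hxα : (0:ℝ) ≤ x ^ α := (Real.rpow_pos_of_pos hx α).le
  have h3 : x ^ (α - 1) * x = x ^ α := by
    rw [← Real.rpow_add_one hx.ne' (α - 1)]; congr 1; ring
  have h1 : (1 + 1/x) ^ α * x ^ α = (x + 1) ^ α := by
    rw [← Real.mul_rpow (by positivity) hx.le]
    congr 1; field_simp
  have h2 : (1 + α * (1/x)) * x ^ α = x ^ α + α * x ^ (α - 1) := by
    field_simp; nlinarith [h3]
  have := mul_le_mul_of_nonneg_right hB hxα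
  rw [h1, h2] at this
  nlinarith [this, h3]

lemma auxB (α : ℝ) (hα : 1 < α) (x : ℝ) (hx : 1 ≤ x) :
    (α - 1) * (x + 1) ^ (-α) ≤ x ^ (1 - α) - (x + 1) ^ (1 - α) := by
  have hx0 : 0 < x := lt_of_lt_of_le one_pos hx
  have hx1 : 0 < x + 1 := by linarith
  have hA := auxA α hα.le x hx0
  have hApos : 0 < x ^ (α - 1) := Real.rpow_pos_of_pos hx0 _
  have hBpos : 0 < (x + 1) ^ α := Real.rpow_pos_of_pos hx1 _
  have e1 : (x + 1) ^ (-α) = 1 / (x + 1) ^ α := by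
    rw [Real.rpow_neg hx1.le, one_div]
  have e2 : (x + 1) ^ (1 - α) = (x + 1) / (x + 1) ^ α := by
    rw [Real.rpow_sub hx1, Real.rpow_one]
  have e3 : x ^ (1 - α) = 1 / x ^ (α - 1) := by
    rw [show (1 - α) = -(α - 1) by ring, Real.rpow_neg hx0.le, one_div]
  rw [e1, e2, e3]
  have key : (α - 1 + (x + 1)) / (x + 1) ^ α ≤ 1 / x ^ (α - 1) := by
    rw [div_le_div_iff₀ hBpos hApos]
    nlinarith [hA]
  rw [mul_one_div]
  have : (α - 1) / (x + 1) ^ α + (x + 1) / (x + 1) ^ α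
      = (α - 1 + (x + 1)) / (x + 1) ^ α := by rw [← add_div]
  linarith [key, this]

lemma auxS (α : ℝ) (hα : 1 < α) :
    Summable (fun j : ℕ => ((j : ℝ) + 1) ^ (-α)) := by
  have h : Summable (fun n : ℕ => (n : ℝ) ^ (-α)) :=
    Real.summable_nat_rpow.2 (by linarith)
  have := (summable_nat_add_iff 1).2 h
  refine this.congr fun j => ?_
  push_cast
  ring_nf

lemma auxC (α : ℝ) (hα : 1 < α) (N : ℕ) (hN : 1 ≤ N) :
    ∑' i : ℕ, (((i + N : ℕ) : ℝ) + 1) ^ (-α) ≤ (N : ℝ) ^ (1 - α) / (α - 1) := by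
  have hα1 : (0:ℝ) < α - 1 := by linarith
  have hNR : (1:ℝ) ≤ (N : ℝ) := by exact_mod_cast hN
  refine Real.tsum_le_of_sum_range_le (fun n => Real.rpow_nonneg (by positivity) _) fun n => ?_
  -- partial sums bounded
  have key : ∀ i : ℕ, (α - 1) * (((i + N : ℕ) : ℝ) + 1) ^ (-α)
      ≤ (((i : ℝ) + N) ^ (1 - α) - (((i+1 : ℕ) : ℝ) + N) ^ (1 - α)) := by
    intro i
    have hx : (1:ℝ) ≤ (i : ℝ) + N := by
      have : (0:ℝ) ≤ (i:ℝ) := Nat.cast_nonneg i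
      linarith
    have := auxB α hα ((i : ℝ) + N) hx
    have e : (((i + N : ℕ) : ℝ) + 1) = ((i:ℝ) + N) + 1 := by push_cast; ring
    have e2 : (((i+1 : ℕ) : ℝ) + N) = ((i:ℝ) + N) + 1 := by push_cast; ring
    rw [e, e2]
    exact this
  have tele : ∑ i ∈ Finset.range n,
      ((((i : ℕ) : ℝ) + N) ^ (1 - α) - (((i+1 : ℕ) : ℝ) + N) ^ (1 - α))
      = ((0:ℝ) + N) ^ (1 - α) - (((n : ℕ) : ℝ) + N) ^ (1 - α) := by
    have := Finset.sum_range_sub' (fun i : ℕ => (((i : ℕ) : ℝ) + N) ^ (1 - α)) n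
    simpa using this
  have hsum : (α - 1) * ∑ i ∈ Finset.range n, (((i + N : ℕ) : ℝ) + 1) ^ (-α)
      ≤ ((0:ℝ) + N) ^ (1 - α) - (((n : ℕ) : ℝ) + N) ^ (1 - α) := by
    rw [Finset.mul_sum, ← tele]
    exact Finset.sum_le_sum fun i _ => key i
  have hlast : (0:ℝ) ≤ (((n : ℕ) : ℝ) + N) ^ (1 - α) :=
    Real.rpow_nonneg (by positivity) _
  rw [le_div_iff₀ hα1]
  calc (∑ i ∈ Finset.range n, (((i + N : ℕ) : ℝ) + 1) ^ (-α)) * (α - 1)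
      = (α - 1) * ∑ i ∈ Finset.range n, (((i + N : ℕ) : ℝ) + 1) ^ (-α) := by ring
    _ ≤ ((0:ℝ) + N) ^ (1 - α) - (((n : ℕ) : ℝ) + N) ^ (1 - α) := hsum
    _ ≤ (N : ℝ) ^ (1 - α) := by rw [zero_add]; linarith


/-- Lemma 4 of the paper: if `λ_j ≍ j^{−α}` with `α > 1`, then
`Σ_j λ_j (λ_j + ε)^{−2} = O(ε^{−(α+1)/α})` uniformly for `ε ∈ (0, 1]`.
(Indices are shifted so that `lam j` plays the role of `λ_{j+1}`.) -/
theorem stmt8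
    (α : ℝ) (hα : 1 < α)
    (lam : ℕ → ℝ) (c C : ℝ) (hc : 0 < c) (hcC : c ≤ C)
    (hpos : ∀ j, 0 < lam j)
    (hlow : ∀ j : ℕ, c * ((j : ℝ) + 1) ^ (-α) ≤ lam j)
    (hhigh : ∀ j : ℕ, lam j ≤ C * ((j : ℝ) + 1) ^ (-α)) :
    ∃ K > 0, ∀ ε : ℝ, 0 < ε → ε ≤ 1 →
      Summable (fun j => lam j / (lam j + ε) ^ 2) ∧
      ∑' j : ℕ, lam j / (lam j + ε) ^ 2 ≤ K * ε ^ (-(α + 1) / α) := by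
  have hC : 0 < C := lt_of_lt_of_le hc hcC
  have hα1 : (0:ℝ) < α - 1 := by linarith
  have hα0 : (0:ℝ) < α := by linarith
  refine ⟨1/2 + C/(α-1), by positivity, fun ε hε hε1 => ?_⟩
  set f : ℕ → ℝ := fun j => lam j / (lam j + ε) ^ 2 with hfdef
  have hfnn : ∀ j, 0 ≤ f j := fun j => by
    have := hpos j; positivity
  have hfle : ∀ j, f j ≤ (C / ε^2) * ((j : ℝ) + 1) ^ (-α) := by
    intro j
    have h1 : f j ≤ lam j / ε^2 := by
      apply div_le_div_of_nonneg_left (hpos j).le (by positivity)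
      nlinarith [(hpos j).le, hε.le, sq_nonneg (lam j)]
    refine h1.trans ?_
    rw [div_le_iff₀ (by positivity)]
    have := hhigh j
    have hrp : (0:ℝ) ≤ ((j:ℝ)+1) ^ (-α) := Real.rpow_nonneg (by positivity) _
    calc lam j ≤ C * ((j:ℝ)+1)^(-α) := this
      _ = C / ε^2 * ((j:ℝ)+1)^(-α) * ε^2 := by
          rw [div_mul_eq_mul_div, div_mul_eq_mul_div, mul_div_assoc,
            div_self (pow_ne_zero 2 hε.ne'), mul_one]
  have hf : Summable f :=
    Summable.of_nonneg_of_le hfnn hfle ((auxS α hα).mul_left _)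
  refine ⟨hf, ?_⟩
  -- choose the split point
  set x := ε ^ (-1/α : ℝ) with hxdef
  have hx0 : 0 < x := Real.rpow_pos_of_pos hε _
  have hx1 : 1 ≤ x := by
    apply Real.one_le_rpow_of_pos_of_le_one_of_nonpos hε hε1
    have h : (-1:ℝ)/α < 0 := div_neg_of_neg_of_pos (by norm_num) hα0
    linarith
  set N : ℕ := ⌈x⌉₊ with hNdef
  have hNge : x ≤ (N : ℝ) := Nat.le_ceil x
  have hNle : (N : ℝ) ≤ 2 * x := by
    have := Nat.ceil_lt_add_one (le_of_lt hx0)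
    have : (N : ℝ) < x + 1 := this
    linarith
  have hN1 : 1 ≤ N := by
    have : (1:ℝ) ≤ (N:ℝ) := le_trans hx1 hNge
    exact_mod_cast this
  -- split the sum
  rw [← Summable.sum_add_tsum_nat_add N hf]
  -- head bound: each term ≤ 1/(4ε)
  have hhead : ∑ i ∈ Finset.range N, f i ≤ (N : ℝ) * (1 / (4 * ε)) := by
    have hterm : ∀ i, f i ≤ 1 / (4 * ε) := by
      intro i
      have hli : 0 < lam i + ε := by have := hpos i; linarith
      show lam i / (lam i + ε) ^ 2 ≤ 1 / (4 * ε)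
      rw [div_le_div_iff₀ (pow_pos hli 2) (by positivity)]
      nlinarith [sq_nonneg (lam i - ε), (hpos i).le, hε.le]
    calc ∑ i ∈ Finset.range N, f i ≤ ∑ _i ∈ Finset.range N, (1 / (4 * ε)) :=
          Finset.sum_le_sum fun i _ => hterm i
      _ = (N : ℝ) * (1 / (4 * ε)) := by
          rw [Finset.sum_const, Finset.card_range, nsmul_eq_mul]
  -- tail bound
  have hSsh : Summable (fun i : ℕ => (((i + N : ℕ) : ℝ) + 1) ^ (-α)) :=
    (summable_nat_add_iff N).2 (auxS α hα)
  have htail : ∑' i : ℕ, f (i + N)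
      ≤ (C / ε^2) * ((N:ℝ) ^ (1 - α) / (α - 1)) := by
    have h1 : ∑' i : ℕ, f (i + N)
        ≤ ∑' i : ℕ, (C / ε^2) * (((i + N : ℕ) : ℝ) + 1) ^ (-α) := by
      refine ((summable_nat_add_iff N).2 hf).tsum_le_tsum (fun i => hfle (i + N))
        (hSsh.mul_left _)
    refine h1.trans ?_
    rw [tsum_mul_left]
    exact mul_le_mul_of_nonneg_left (auxC α hα N hN1) (by positivity)
  -- rpow arithmetic
  have hE1 : ε ^ (-(α + 1) / α) = x * ε⁻¹ := by
    rw [hxdef, ← Real.rpow_neg_one ε, ← Real.rpow_add hε]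
    congr 1
    field_simp
    ring
  have hE2 : ε ^ (-(α + 1) / α) = x ^ (1 - α) * (ε^2)⁻¹ := by
    have e4 : (ε^2)⁻¹ = ε ^ ((-2):ℝ) := by
      rw [show ((-2):ℝ) = -((2:ℕ):ℝ) by norm_num, Real.rpow_neg hε.le,
        Real.rpow_natCast]
    have e5 : x ^ (1 - α) = ε ^ ((-1/α) * (1 - α)) := by
      rw [hxdef, Real.rpow_mul hε.le]
    rw [e5, e4, ← Real.rpow_add hε]
    congr 1
    field_simp
    ring
  have hhead2 : (N : ℝ) * (1 / (4 * ε)) ≤ (1/2) * ε ^ (-(α + 1) / α) := by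
    rw [hE1]
    have h4 : (0:ℝ) < 4 * ε := by positivity
    calc (N : ℝ) * (1 / (4 * ε)) ≤ (2 * x) * (1 / (4 * ε)) := by
          apply mul_le_mul_of_nonneg_right hNle (by positivity)
      _ = (1/2) * (x * ε⁻¹) := by
          simp only [div_eq_mul_inv, mul_inv]; ring
  have htail2 : (C / ε^2) * ((N:ℝ) ^ (1 - α) / (α - 1))
      ≤ (C / (α - 1)) * ε ^ (-(α + 1) / α) := by
    rw [hE2]
    have hNp : (N : ℝ) ^ (1 - α) ≤ x ^ (1 - α) :=
      Real.rpow_le_rpow_of_nonpos hx0 hNge (by linarith)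
    calc (C / ε^2) * ((N:ℝ) ^ (1 - α) / (α - 1))
        ≤ (C / ε^2) * (x ^ (1 - α) / (α - 1)) := by
          gcongr
      _ = C / (α - 1) * (x ^ (1 - α) * (ε ^ 2)⁻¹) := by
          simp only [div_eq_mul_inv, mul_inv]; ring
  calc ∑ i ∈ Finset.range N, f i + ∑' i : ℕ, f (i + N)
      ≤ (1/2) * ε ^ (-(α + 1) / α) + (C / (α - 1)) * ε ^ (-(α + 1) / α) :=
        add_le_add (hhead.trans hhead2) (htail.trans htail2)
    _ = (1/2 + C/(α-1)) * ε ^ (-(α + 1) / α) := by ring
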